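/- For every integrable complex structure J on g, the derived subalgebra [g,g] = span(E₅,E₆) is J-invariant, i.e. J([g,g]) = [g,g]. -/

import Mathlib

open scoped ComplexOrder

noncomputable section

/-- The underlying real vector space of the Lie algebra `g` (coordinates w.r.t. `E₁,…,E₆`). -/
abbrev GV : Type := Fin 6 → ℝ

/-- The basis vectors `E₁,…,E₆` (indexed by `0,…,5`). -/
def E (i : Fin 6) : GV := Pi.single i 1

/-- The Lie bracket of `g`: the only nonzero brackets of basis vectors are
`[E₁,E₃] = -E₅`, `[E₂,E₄] = E₅`, `[E₁,E₄] = -E₆`, `[E₂,E₃] = -E₆`. -/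
def br (X Y : GV) : GV :=
  ![0, 0, 0, 0,
    -(X 0 * Y 2 - X 2 * Y 0) + (X 1 * Y 3 - X 3 * Y 1),
    -(X 0 * Y 3 - X 3 * Y 0) - (X 1 * Y 2 - X 2 * Y 1)]

/-- `J` is a complex structure: `J ∘ J = -id`. -/
def IsCpxStr (J : Module.End ℝ GV) : Prop := ∀ x, J (J x) = -x

/-- Integrability (Newlander–Nirenberg) condition. -/
def Integrable (J : Module.End ℝ GV) : Prop :=
  ∀ X Y, br (J X) (J Y) = br X Y + J (br (J X) Y) + J (br X (J Y))

/-- `J` induces the standard orientation of `g`. -/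
def PosOrient (J : Module.End ℝ GV) : Prop :=
  ∃ v₁ v₂ v₃ : GV,
    0 < (Matrix.of fun i j => ![v₁, J v₁, v₂, J v₂, v₃, J v₃] i j).det

/-- `C⁺(g)`: integrable complex structures inducing the standard orientation. -/
def Cplus : Set (Module.End ℝ GV) := {J | IsCpxStr J ∧ Integrable J ∧ PosOrient J}

/-- The inner product making `E₁,…,E₆` orthonormal. -/
def inner6 (x y : GV) : ℝ := ∑ i, x i * y i

def IsOrthog (J : Module.End ℝ GV) : Prop := ∀ x y, inner6 (J x) (J y) = inner6 x y

/-- `C⁺(g,g)`: orthogonal members of `C⁺(g)`. -/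
def Cgg : Set (Module.End ℝ GV) := {J | J ∈ Cplus ∧ IsOrthog J}

lemma le46 : (4:ℕ) ≤ 6 := by norm_num

/-- Determinant of `(w̄₁, Ĵw̄₁, w̄₂, Ĵw̄₂)` w.r.t. the basis `(Ē₁,…,Ē₄)` of `g/[g,g]`
(the coordinates of the class of `v` are the first four coordinates of `v`). -/
def hatDet (J : Module.End ℝ GV) (w₁ w₂ : GV) : ℝ :=
  (Matrix.of fun (i : Fin 4) (j : Fin 4) =>
    ![w₁, J w₁, w₂, J w₂] i (Fin.castLE le46 j)).det

/-- `C₊`: members of `C⁺(g)` whose induced structure on `g/[g,g]` is positively oriented. -/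
def CplusP : Set (Module.End ℝ GV) :=
  {J | J ∈ Cplus ∧ ∃ w₁ w₂ : GV, 0 < hatDet J w₁ w₂}

/-- `C₋`: members of `C⁺(g)` whose induced structure on `g/[g,g]` is negatively oriented. -/
def CplusM : Set (Module.End ℝ GV) :=
  {J | J ∈ Cplus ∧ ∃ w₁ w₂ : GV, hatDet J w₁ w₂ < 0}

/-- `ℂ ⊗ g*`, identified with coordinate vectors with respect to the dual basis `e¹,…,e⁶`. -/
abbrev MC : Type := Fin 6 → ℂ

/-- Evaluation of a complexified 1-form on a vector of `g`. -/
def ev (α : MC) (v : GV) : ℂ := ∑ i, α i * v i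

/-- The dual basis `e¹,…,e⁶` inside `ℂ ⊗ g*`. -/
def eC (i : Fin 6) : MC := Pi.single i 1

def w1 : MC := eC 0 + Complex.I • eC 1
def w2 : MC := eC 2 + Complex.I • eC 3
def w3 : MC := eC 4 + Complex.I • eC 5
/-- `ω̄¹` -/
def w1b : MC := eC 0 - Complex.I • eC 1
/-- `ω̄²` -/
def w2b : MC := eC 2 - Complex.I • eC 3
/-- `ω̄³` -/
def w3b : MC := eC 4 - Complex.I • eC 5

/-- The space of `(1,0)`-forms of `J`, a complex subspace of `ℂ ⊗ g*`. -/
def holSub (J : Module.End ℝ GV) : Submodule ℂ MC where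
  carrier := {α | ∀ v : GV, ev α (J v) = Complex.I * ev α v}
  add_mem' := by
    intro a b ha hb v
    simp only [ev, Pi.add_apply, add_mul, Finset.sum_add_distrib] at *
    rw [ha v, hb v]; ring
  zero_mem' := by intro v; simp [ev]
  smul_mem' := by
    intro c α hα v
    simp only [ev, Pi.smul_apply, smul_eq_mul, mul_assoc, ← Finset.mul_sum] at *
    rw [hα v]; ring
/-- `(α₁, α₂, α₃)` is a basis of the space of `(1,0)`-forms of `J`. -/
def IsHolBasis (J : Module.End ℝ GV) (α₁ α₂ α₃ : MC) : Prop :=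
  LinearIndependent ℂ ![α₁, α₂, α₃] ∧ Submodule.span ℂ {α₁, α₂, α₃} = holSub J

/-- Inclusion into the exterior algebra of `ℂ ⊗ g*`; wedge products are multiplications there. -/
def ι : MC →ₗ[ℂ] ExteriorAlgebra ℂ MC := ExteriorAlgebra.ι ℂ

/-- The standard bi-invariant complex structure `J₀`. -/
def J0 : Module.End ℝ GV :=
  Matrix.mulVecLin !![0,-1,0,0,0,0; 1,0,0,0,0,0; 0,0,0,-1,0,0;
                      0,0,1,0,0,0; 0,0,0,0,0,-1; 0,0,0,0,1,0]

/-- The vector space underlying `V = span(E₁,E₂,E₃,E₄)`. -/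
abbrev W4 : Type := Fin 4 → ℝ

/-- Inclusion `V = span(E₁,…,E₄) ↪ g`. -/
def incl (w : W4) : GV := fun i => if h : (i : ℕ) < 4 then w ⟨i, h⟩ else 0

def det4W (v : Fin 4 → W4) : ℝ := (Matrix.of fun i j => v i j).det

/-- The topology on the space of `ℝ`-linear endomorphisms of `g`
(as a subspace of the space of all maps `g → g`). -/
instance : TopologicalSpace (Module.End ℝ GV) :=
  TopologicalSpace.induced (fun f => (f : GV → GV)) inferInstance

/-- The span of `E₁,E₂,E₃,E₄`. -/
def V4span : Submodule ℝ GV := Submodule.span ℝ {E 0, E 1, E 2, E 3}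

/-- The derived subalgebra `[g,g] = span(E₅,E₆)` described by coordinates. -/
def D' : Submodule ℝ GV where
  carrier := {x | x 0 = 0 ∧ x 1 = 0 ∧ x 2 = 0 ∧ x 3 = 0}
  add_mem' := by intro a b ha hb; simp_all
  zero_mem' := by simp
  smul_mem' := by intro c x hx; simp_all

lemma memD' {x : GV} : x ∈ D' ↔ x 0 = 0 ∧ x 1 = 0 ∧ x 2 = 0 ∧ x 3 = 0 := Iff.rfl

lemma cons_val_four' (a b c d e f : ℝ) : ![a,b,c,d,e,f] 4 = e := by simp

lemma cons_val_five' (a b c d e f : ℝ) : ![a,b,c,d,e,f] 5 = f := by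
  simp [show (5 : Fin 6) = Fin.succ 4 from rfl, Matrix.cons_val_succ]

lemma gv_ext {x y : GV} (h0 : x 0 = y 0) (h1 : x 1 = y 1) (h2 : x 2 = y 2)
    (h3 : x 3 = y 3) (h4 : x 4 = y 4) (h5 : x 5 = y 5) : x = y := by
  funext i
  fin_cases i <;> assumption

lemma spanD : Submodule.span ℝ {E 4, E 5} = D' := by
  apply le_antisymm
  · rw [Submodule.span_le]
    rintro x (rfl | rfl) <;> simp [memD', E, Pi.single_apply]
  · intro x hx
    obtain ⟨h0, h1, h2, h3⟩ := hx
    have hx4 : (E 4 : GV) ∈ Submodule.span ℝ ({E 4, E 5} : Set GV) :=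
      Submodule.subset_span (by simp)
    have hx5 : (E 5 : GV) ∈ Submodule.span ℝ ({E 4, E 5} : Set GV) :=
      Submodule.subset_span (by simp)
    have hxe : x = x 4 • E 4 + x 5 • E 5 := by
      funext i
      fin_cases i <;>
        simp_all [E, Pi.single_apply]
    rw [hxe]
    exact Submodule.add_mem _ (Submodule.smul_mem _ _ hx4) (Submodule.smul_mem _ _ hx5)

lemma br_memD' (X Y : GV) : br X Y ∈ D' := by
  refine ⟨?_, ?_, ?_, ?_⟩ <;> simp [br]

lemma central {Z : GV} (hZ : Z ∈ D') (Y : GV) : br Z Y = 0 := by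
  obtain ⟨h0, h1, h2, h3⟩ := hZ
  funext i
  fin_cases i <;> simp [br, cons_val_four', cons_val_five', h0, h1, h2, h3]

lemma mem_of_central {W : GV} (h : ∀ Y, br W Y = 0) : W ∈ D' := by
  have h0 := congrFun (h (E 0)) 4
  have h1 := congrFun (h (E 0)) 5
  have h2 := congrFun (h (E 2)) 4
  have h3 := congrFun (h (E 2)) 5
  simp [br, E, Pi.single_apply, cons_val_four', cons_val_five'] at h0 h1 h2 h3
  exact ⟨h2, h3, h0, h1⟩

/-- every integrable complex structure on `g` preserves
`[g,g] = span(E₅,E₆)`. -/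
theorem stmt0 (J : Module.End ℝ GV) (hJ : IsCpxStr J) (hint : Integrable J) :
    Submodule.map J (Submodule.span ℝ {E 4, E 5}) = Submodule.span ℝ {E 4, E 5} := by
  rw [spanD]
  -- It suffices to prove `J` maps `D'` into `D'`.
  suffices hle : ∀ x ∈ D', J x ∈ D' by
    apply le_antisymm
    · rintro _ ⟨x, hx, rfl⟩; exact hle x hx
    · intro x hx
      refine ⟨-(J x), Submodule.neg_mem _ (hle x hx), ?_⟩
      rw [map_neg, hJ x, neg_neg]
  by_cases hc : ∀ Z ∈ D', ∀ Y, br (J Z) Y = 0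
  · -- `J` maps central elements to central elements
    intro x hx
    have hJ4 : J (E 4) ∈ D' := mem_of_central (hc (E 4) (by simp [memD', E, Pi.single_apply]))
    have hJ5 : J (E 5) ∈ D' := mem_of_central (hc (E 5) (by simp [memD', E, Pi.single_apply]))
    obtain ⟨h0, h1, h2, h3⟩ := hx
    have hxe : x = x 4 • E 4 + x 5 • E 5 := by
      funext i
      fin_cases i <;> simp_all [E, Pi.single_apply]
    rw [hxe, map_add, map_smul, map_smul]
    exact Submodule.add_mem _ (Submodule.smul_mem _ _ hJ4) (Submodule.smul_mem _ _ hJ5)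
  · push_neg at hc
    obtain ⟨Z, hZ, Y, hu⟩ := hc
    set u : GV := br (J Z) Y with hudef
    have huD : u ∈ D' := br_memD' _ _
    -- integrability gives `br (J Z) (J Y) = J u`
    have hv : br (J Z) (J Y) = J u := by
      have := hint Z Y
      rw [central hZ Y, central hZ (J Y)] at this
      simpa using this
    set v : GV := J u with hvdef
    have hvD : v ∈ D' := hv ▸ br_memD' _ _
    have hJv : J v = -u := hJ u
    obtain ⟨hu0, hu1, hu2, hu3⟩ := huD
    obtain ⟨hv0, hv1, hv2, hv3⟩ := hvD
    have hab : u 4 ≠ 0 ∨ u 5 ≠ 0 := by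
      by_contra hcon
      push_neg at hcon
      apply hu
      funext i
      fin_cases i <;> first | assumption | exact hcon.1 | exact hcon.2
    -- the determinant `u 4 * v 5 - u 5 * v 4` is nonzero
    have hdet : u 4 * v 5 - u 5 * v 4 ≠ 0 := by
      intro hΔ
      -- then `v = l • u` for a real `l`, contradicting `J v = -u`
      obtain ⟨l, hl4, hl5⟩ : ∃ l : ℝ, v 4 = l * u 4 ∧ v 5 = l * u 5 := by
        rcases hab with ha | hb
        · refine ⟨v 4 / u 4, by field_simp, ?_⟩
          field_simp
          nlinarith [hΔ]
        · refine ⟨v 5 / u 5, ?_, by field_simp⟩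
          field_simp
          nlinarith [hΔ]
      have hl : v = l • u := by
        refine gv_ext ?_ ?_ ?_ ?_ ?_ ?_ <;>
          simp only [Pi.smul_apply, smul_eq_mul, hv0, hv1, hv2, hv3, hu0, hu1, hu2, hu3,
            mul_zero] <;> first | rfl | exact hl4 | exact hl5
      have hcalc : -u = (l * l) • u := by
        calc -u = J v := hJv.symm
          _ = J (l • u) := by rw [← hl]
          _ = l • J u := map_smul J l u
          _ = l • v := by rw [← hvdef]
          _ = l • (l • u) := by rw [hl]
          _ = (l * l) • u := smul_smul l l u
      rcases hab with ha | hb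
      · have h4' := congrFun hcalc 4
        simp only [Pi.neg_apply, Pi.smul_apply, smul_eq_mul] at h4'
        have h1 : u 4 * (l * l + 1) = 0 := by nlinarith [h4']
        rcases mul_eq_zero.mp h1 with h | h
        · exact ha h
        · nlinarith [mul_self_nonneg l]
      · have h5' := congrFun hcalc 5
        simp only [Pi.neg_apply, Pi.smul_apply, smul_eq_mul] at h5'
        have h1 : u 5 * (l * l + 1) = 0 := by nlinarith [h5']
        rcases mul_eq_zero.mp h1 with h | h
        · exact hb h
        · nlinarith [mul_self_nonneg l]
    -- every element of `D'` is a combination of `u` and `v`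
    intro x hx
    obtain ⟨h0, h1, h2, h3⟩ := hx
    have hxe : x = ((x 4 * v 5 - x 5 * v 4) / (u 4 * v 5 - u 5 * v 4)) • u
        + ((u 4 * x 5 - u 5 * x 4) / (u 4 * v 5 - u 5 * v 4)) • v := by
      refine gv_ext ?_ ?_ ?_ ?_ ?_ ?_ <;>
        simp only [Pi.add_apply, Pi.smul_apply, smul_eq_mul, hv0, hv1, hv2, hv3,
          hu0, hu1, hu2, hu3, h0, h1, h2, h3, mul_zero, add_zero] <;>
        (try (rw [div_mul_eq_mul_div, div_mul_eq_mul_div, ← add_div, eq_div_iff hdet]; ring))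
    rw [hxe, map_add, map_smul, map_smul, ← hvdef, hJv]
    refine Submodule.add_mem _ (Submodule.smul_mem _ _ ⟨hv0, hv1, hv2, hv3⟩)
      (Submodule.smul_mem _ _ (Submodule.neg_mem _ ⟨hu0, hu1, hu2, hu3⟩))

end
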